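/- Let OABC be a trapezoid with OA parallel to BC, whose area equals its perimeter, and let h be the distance between the parallel lines OA and BC. Then h > 2. -/

import Mathlib

noncomputable section

/-- Euclidean distance between two points of `ℝ × ℝ`. -/
def dist2 (p q : ℝ × ℝ) : ℝ := Real.sqrt ((p.1 - q.1) ^ 2 + (p.2 - q.2) ^ 2)

/-- Signed cross product of the vectors `q - p` and `r - p`. -/
def cross (p q r : ℝ × ℝ) : ℝ :=
  (q.1 - p.1) * (r.2 - p.2) - (q.2 - p.2) * (r.1 - p.1)

/-- Three points are collinear. -/
def Collinear3 (p q r : ℝ × ℝ) : Prop := cross p q r = 0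

/-- Dot product on `ℝ × ℝ`. -/
def dot2 (p q : ℝ × ℝ) : ℝ := p.1 * q.1 + p.2 * q.2

/-- Closed segment between two points. -/
def Seg (p q : ℝ × ℝ) : Set (ℝ × ℝ) :=
  {x | ∃ t : ℝ, 0 ≤ t ∧ t ≤ 1 ∧ x = (1 - t) • p + t • q}

/-- Twice the signed (shoelace) area of the quadrilateral `O A B C`. -/
def shoelace (O A B C : ℝ × ℝ) : ℝ :=
  (O.1 * A.2 - A.1 * O.2) + (A.1 * B.2 - B.1 * A.2) +
    (B.1 * C.2 - C.1 * B.2) + (C.1 * O.2 - O.1 * C.2)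

/-- Area of the (simple) quadrilateral `O A B C`, by the shoelace formula. -/
def quadArea (O A B C : ℝ × ℝ) : ℝ := |shoelace O A B C| / 2

/-- Perimeter of the quadrilateral `O A B C`. -/
def quadPerim (O A B C : ℝ × ℝ) : ℝ :=
  dist2 O A + dist2 A B + dist2 B C + dist2 C O

/-- Simple quadrilateral: no three vertices collinear, and the four closed sides
intersect only at shared endpoints. -/
def IsSimpleQuad (O A B C : ℝ × ℝ) : Prop :=
  ¬ Collinear3 O A B ∧ ¬ Collinear3 A B C ∧ ¬ Collinear3 B C O ∧ ¬ Collinear3 C O A ∧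
  Seg O A ∩ Seg B C = ∅ ∧ Seg A B ∩ Seg C O = ∅ ∧
  Seg O A ∩ Seg A B = {A} ∧ Seg A B ∩ Seg B C = {B} ∧
  Seg B C ∩ Seg C O = {C} ∧ Seg C O ∩ Seg O A = {O}

/-- Quadrilateral `O A B C`: simple, with vertices in counterclockwise order. -/
def IsQuad (O A B C : ℝ × ℝ) : Prop :=
  IsSimpleQuad O A B C ∧ 0 < shoelace O A B C

/-- A point of `ℝ × ℝ` with integer coordinates. -/
def IsLatticePt (p : ℝ × ℝ) : Prop := ∃ m n : ℤ, p = ((m : ℝ), (n : ℝ))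

/-- An isometry of the Euclidean plane `ℝ × ℝ`. -/
def IsIsometry2 (f : ℝ × ℝ → ℝ × ℝ) : Prop :=
  Function.Bijective f ∧ ∀ p q, dist2 (f p) (f q) = dist2 p q

/-- The four vertices are in convex position: no vertex lies in the convex hull
of the other three. -/
def ConvexPos (O A B C : ℝ × ℝ) : Prop :=
  O ∉ convexHull ℝ ({A, B, C} : Set (ℝ × ℝ)) ∧
  A ∉ convexHull ℝ ({O, B, C} : Set (ℝ × ℝ)) ∧
  B ∉ convexHull ℝ ({O, A, C} : Set (ℝ × ℝ)) ∧
  C ∉ convexHull ℝ ({O, A, B} : Set (ℝ × ℝ))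

/-- The segment `pq` is parallel to the segment `rs`. -/
def Para (p q r s : ℝ × ℝ) : Prop :=
  (q.1 - p.1) * (s.2 - r.2) - (q.2 - p.2) * (s.1 - r.1) = 0

/-- Area of the triangle `p q r`. -/
def triArea (p q r : ℝ × ℝ) : ℝ := |cross p q r| / 2

/-- Heron's formula: area of a triangle with side lengths `p`, `q`, `r`. -/
def heronArea (p q r : ℝ) : ℝ :=
  Real.sqrt ((p + q + r) * (-p + q + r) * (p - q + r) * (p + q - r)) / 4

end


lemma dist2_pos' {p q : ℝ × ℝ} (hne : p ≠ q) : 0 < dist2 p q := by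
  apply Real.sqrt_pos.mpr
  rcases eq_or_ne p.1 q.1 with h1 | h1
  · have h2 : p.2 - q.2 ≠ 0 := by
      intro hh
      exact hne (Prod.ext h1 (by linarith [sub_eq_zero.mp hh]))
    have : 0 < (p.2 - q.2) ^ 2 := by positivity
    nlinarith [sq_nonneg (p.1 - q.1)]
  · have h1' : p.1 - q.1 ≠ 0 := sub_ne_zero.mpr h1
    have : 0 < (p.1 - q.1) ^ 2 := by positivity
    nlinarith [sq_nonneg (p.2 - q.2)]

/-- for an equable trapezoid, the distance between the two
parallel sides exceeds 2. -/
theorem equable_trapezoid_height (O A B C : ℝ × ℝ) (h : ℝ)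
    (hquad : IsQuad O A B C)
    (hpara : Para O A B C) (hnpara : ¬ Para A B C O)
    (hheight : h = |cross O A B| / dist2 O A)
    (hequable : quadArea O A B C = quadPerim O A B C) :
    2 < h := by
  obtain ⟨⟨hOAB, hABC, hBCO, hCOA, _⟩, hcc⟩ := hquad
  have hs : cross O A B ≠ 0 := hOAB
  -- O ≠ A
  have hOA : O ≠ A := by
    rintro rfl
    exact hs (by unfold cross; ring)
  have hAB : A ≠ B := by
    rintro rfl
    exact hs (by unfold cross; ring)
  have hCO : C ≠ O := by
    rintro rfl
    exact hBCO (by unfold Collinear3 cross; ring)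
  have ha : 0 < dist2 O A := dist2_pos' hOA
  have hb : 0 < dist2 A B := dist2_pos' hAB
  have hd : 0 < dist2 C O := dist2_pos' hCO
  -- direction vector of OA is nonzero
  have hu : A.1 - O.1 ≠ 0 ∨ A.2 - O.2 ≠ 0 := by
    by_contra hcon
    push_neg at hcon
    apply hs
    unfold cross
    rw [hcon.1, hcon.2]; ring
  -- get t with C - B = t • (A - O)
  have hpara' : (A.1 - O.1) * (C.2 - B.2) - (A.2 - O.2) * (C.1 - B.1) = 0 := hpara
  obtain ⟨t, hC1, hC2⟩ : ∃ t : ℝ, C.1 = B.1 + t * (A.1 - O.1) ∧ C.2 = B.2 + t * (A.2 - O.2) := by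
    rcases hu with h1 | h2
    · refine ⟨(C.1 - B.1) / (A.1 - O.1), by field_simp; ring, ?_⟩
      field_simp
      nlinarith [hpara']
    · refine ⟨(C.2 - B.2) / (A.2 - O.2), ?_, by field_simp; ring⟩
      field_simp
      nlinarith [hpara']
  -- shoelace identity
  have hsh : shoelace O A B C = cross O A B * (1 - t) := by
    unfold shoelace cross
    rw [hC1, hC2]; ring
  -- length of BC
  have hc : dist2 B C = |t| * dist2 O A := by
    unfold dist2
    have : (B.1 - C.1) ^ 2 + (B.2 - C.2) ^ 2
        = t ^ 2 * ((O.1 - A.1) ^ 2 + (O.2 - A.2) ^ 2) := by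
      rw [hC1, hC2]; ring
    rw [this, Real.sqrt_mul (sq_nonneg t), Real.sqrt_sq_eq_abs]
  have h1t : 0 < |1 - t| := by
    rw [hsh] at hcc
    have : (1 : ℝ) - t ≠ 0 := by
      intro hh
      rw [hh, mul_zero] at hcc
      exact lt_irrefl 0 hcc
    exact abs_pos.mpr this
  have harea : quadArea O A B C = |cross O A B| * |1 - t| / 2 := by
    unfold quadArea
    rw [hsh, abs_mul]
  have hcs : |cross O A B| = h * dist2 O A := by
    rw [hheight]
    field_simp
  rw [harea, hcs] at hequable
  unfold quadPerim at hequable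
  rw [hc] at hequable
  have habs : |1 - t| ≤ 1 + |t| := by
    calc |1 - t| ≤ |(1:ℝ)| + |t| := abs_sub _ _
    _ = 1 + |t| := by rw [abs_one]
  have htnn : 0 ≤ |t| := abs_nonneg t
  nlinarith [mul_pos ha h1t, mul_le_mul_of_nonneg_left habs ha.le]
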